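/- arXiv:1103.4464 — 4 statements merged into one kernel-verified Lean document; each statement's English description precedes it below -/
import Mathlib

section
/- For Baker's bivariate distribution H_+^{(n)}(x,y) = (1/n) Σ_{k=1}^n F_X^{k:n}(x) F_Y^{k:n}(y) with standard exponential marginals F_X(x) = F_Y(x) = 1 - e^{-x} (x > 0), the Pearson correlation coefficient equals ρ_n = 1 - (1/n) Σ_{k=1}^n 1/k. -/
open MeasureTheory
open Real Set Finset

/-- The c.d.f. of the `k`-th order statistic of `n` i.i.d. samples with c.d.f. value `p`. -/
def ordStatCDF (n k : ℕ) (p : ℝ) : ℝ :=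
  ∑ i ∈ Finset.Icc k n, (n.choose i : ℝ) * p ^ i * (1 - p) ^ (n - i)

lemma sum_ordStatCDF (n : ℕ) (hn : 1 ≤ n) (p : ℝ) :
    ∑ k ∈ Finset.Icc 1 n, ordStatCDF n k p = n * p := by
  unfold ordStatCDF
  have swap : ∑ k ∈ Finset.Icc 1 n, ∑ i ∈ Finset.Icc k n,
        (n.choose i : ℝ) * p ^ i * (1 - p) ^ (n - i)
      = ∑ i ∈ Finset.Icc 1 n, (i : ℝ) * ((n.choose i : ℝ) * p ^ i * (1 - p) ^ (n - i)) := by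
    simp_rw [← Finset.Ico_add_one_right_eq_Icc]
    rw [Finset.sum_Ico_Ico_comm]
    apply Finset.sum_congr rfl
    intro i hi
    rw [Finset.sum_const, Finset.Ico_add_one_right_eq_Icc, Nat.card_Icc]
    simp [nsmul_eq_mul]
  rw [swap]
  have key : ∀ i ∈ Finset.Icc 1 n, (i : ℝ) * ((n.choose i : ℝ) * p ^ i * (1 - p) ^ (n - i))
      = (n : ℝ) * p * (((n-1).choose (i-1) : ℝ) * p ^ (i-1) * (1 - p) ^ ((n-1) - (i-1))) := by
    intro i hi
    simp only [Finset.mem_Icc] at hi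
    obtain ⟨i', rfl⟩ : ∃ i', i = i' + 1 := ⟨i-1, by omega⟩
    obtain ⟨n', rfl⟩ : ∃ n', n = n' + 1 := ⟨n-1, by omega⟩
    have hc : (n' + 1) * (n'.choose i') = (n'+1).choose (i'+1) * (i'+1) := Nat.add_one_mul_choose_eq n' i'
    have hc' : ((n' + 1 : ℕ) : ℝ) * (n'.choose i') = ((n'+1).choose (i'+1) : ℝ) * (i'+1) := by
      exact_mod_cast congrArg (Nat.cast : ℕ → ℝ) hc
    simp only [Nat.add_sub_cancel]
    push_cast at hc' ⊢
    have : n' + 1 - (i' + 1) = n' - i' := by omega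
    rw [pow_succ]
    linear_combination (-(p ^ i' * (1 - p) ^ (n' - i') * p)) * hc'
  rw [Finset.sum_congr rfl key, ← Finset.mul_sum]
  have reindex : ∑ i ∈ Finset.Icc 1 n, (((n-1).choose (i-1) : ℝ) * p ^ (i-1) * (1 - p) ^ ((n-1) - (i-1)))
      = ∑ j ∈ Finset.range n, (((n-1).choose j : ℝ) * p ^ j * (1 - p) ^ ((n-1) - j)) := by
    apply Finset.sum_nbij' (fun i => i - 1) (fun j => j + 1)
    · intro a ha; simp at ha ⊢; omega
    · intro a ha; simp at ha ⊢; omega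
    · intro a ha; simp at ha; omega
    · intro a ha; simp
    · intro a ha; rfl
  rw [reindex]
  have binom : ∑ j ∈ Finset.range n, (((n-1).choose j : ℝ) * p ^ j * (1 - p) ^ ((n-1) - j)) = 1 := by
    obtain ⟨m, rfl⟩ : ∃ m, n = m + 1 := ⟨n - 1, by omega⟩
    simp only [Nat.add_sub_cancel]
    have this1 := add_pow p (1-p) m
    simp only [add_sub_cancel, one_pow] at this1
    exact (Finset.sum_congr rfl (fun j _ => by ring)).trans this1.symm
  rw [binom, mul_one]

lemma phi_int (i m : ℕ) (hm : 1 ≤ m) :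
    IntegrableOn (fun x : ℝ => (1 - Real.exp (-x))^i * Real.exp (-x)^m) (Set.Ioi 0) := by
  apply Integrable.mono' (exp_neg_integrableOn_Ioi 0 one_pos)
  · exact Continuous.aestronglyMeasurable (by continuity)
  · filter_upwards [ae_restrict_mem measurableSet_Ioi] with x hx
    have hx : (0:ℝ) < x := hx
    have h1 : 0 < Real.exp (-x) := Real.exp_pos _
    have h2 : Real.exp (-x) ≤ 1 := by
      rw [Real.exp_le_one_iff]; linarith
    have h3 : (0:ℝ) ≤ 1 - Real.exp (-x) := by linarith
    rw [Real.norm_eq_abs, abs_of_nonneg (by positivity)]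
    calc (1 - Real.exp (-x))^i * Real.exp (-x)^m ≤ 1^i * Real.exp (-x)^m := by
          apply mul_le_mul_of_nonneg_right (pow_le_pow_left₀ h3 (by linarith) i) (by positivity)
      _ ≤ Real.exp (-x) ^ 1 := by
          rw [one_pow, one_mul]; exact pow_le_pow_of_le_one h1.le h2 hm
      _ = Real.exp (-1 * x) := by rw [pow_one]; ring_nf

lemma exp_pow_integral (m : ℕ) (hm : 1 ≤ m) :
    ∫ x in Set.Ioi (0:ℝ), Real.exp (-x)^m = 1 / m := by
  have hm0 : (0:ℝ) < m := by exact_mod_cast hm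
  have : ∀ x : ℝ, Real.exp (-x)^m = (fun y => Real.exp (-y)) ((m:ℝ) * x) := by
    intro x
    rw [← Real.exp_nat_mul]
    ring_nf
  simp_rw [this]
  rw [MeasureTheory.integral_comp_mul_left_Ioi (fun y => Real.exp (-y)) 0 hm0]
  rw [mul_zero, integral_exp_neg_Ioi]
  simp

lemma fact_pred (m : ℕ) (hm : 1 ≤ m) : m.factorial = m * (m-1).factorial := by
  obtain ⟨m', rfl⟩ : ∃ m', m = m' + 1 := ⟨m-1, by omega⟩
  simp [Nat.factorial_succ]

lemma phi_val (i : ℕ) : ∀ m : ℕ, 1 ≤ m →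
    ∫ x in Set.Ioi (0:ℝ), (1 - Real.exp (-x))^i * Real.exp (-x)^m
      = (i.factorial * (m-1).factorial : ℝ) / (i+m).factorial := by
  induction i with
  | zero =>
    intro m hm
    simp only [pow_zero, one_mul, Nat.factorial_zero, Nat.cast_one, zero_add]
    rw [exp_pow_integral m hm]
    rw [eq_div_iff (by exact_mod_cast m.factorial_ne_zero)]
    rw [fact_pred m hm]
    push_cast
    have hm0 : (m:ℝ) ≠ 0 := by positivity
    field_simp
  | succ i ih =>
    intro m hm
    have key : ∀ x : ℝ, (1 - Real.exp (-x))^(i+1) * Real.exp (-x)^m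
        = (1 - Real.exp (-x))^i * Real.exp (-x)^m - (1 - Real.exp (-x))^i * Real.exp (-x)^(m+1) := by
      intro x; ring
    simp_rw [key]
    rw [MeasureTheory.integral_sub (phi_int i m hm) (phi_int i (m+1) (by omega))]
    rw [ih m hm, ih (m+1) (by omega)]
    have h1 : (m+1) - 1 = m := by omega
    rw [h1]
    have hfm := fact_pred m hm
    have h2 : (i + (m+1)).factorial = (i + m + 1) * (i+m).factorial := by
      rw [← Nat.factorial_succ]; ring_nf
    have h3 : (i + 1 + m).factorial = (i + m + 1) * (i+m).factorial := by
      rw [← Nat.factorial_succ]; ring_nf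
    have h4 : (i+1).factorial = (i+1) * i.factorial := Nat.factorial_succ i
    rw [h2, h3, h4, hfm]
    have e1 : ((i+m).factorial : ℝ) ≠ 0 := by exact_mod_cast (i+m).factorial_ne_zero
    have e2 : ((i+m+1 : ℕ) : ℝ) ≠ 0 := by positivity
    push_cast
    field_simp
    ring

noncomputable def harm (t : ℕ) : ℝ := ∑ j ∈ Finset.Icc 1 t, (1 / j : ℝ)

lemma harm_succ (t : ℕ) : harm (t+1) = harm t + 1/(t+1) := by
  unfold harm
  rw [← Finset.Ico_add_one_right_eq_Icc, Finset.sum_Ico_succ_top (by omega), Finset.Ico_add_one_right_eq_Icc]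
  push_cast; ring

-- Claim A
lemma claimA (n k : ℕ) (hk : 1 ≤ k) (hkn : k ≤ n) :
    ∑ i ∈ Finset.Icc k (n-1), (1 / (n - i : ℕ) : ℝ) = harm (n - k) := by
  unfold harm
  apply Finset.sum_nbij' (fun i => n - i) (fun j => n - j)
  · intro a ha; simp at ha ⊢; omega
  · intro a ha; simp at ha ⊢; omega
  · intro a ha; simp at ha; omega
  · intro a ha; simp at ha; omega
  · intro a ha; rfl

-- Claim B
lemma claimB (n : ℕ) (hn : 1 ≤ n) :
    ∑ j ∈ Finset.range (n-1), (1 / (j+2) : ℝ) = harm n - 1 := by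
  induction n with
  | zero => omega
  | succ m ih =>
    rcases Nat.eq_or_lt_of_le hn with h | h
    · simp [← h, harm]
    · have hm : 1 ≤ m := by omega
      have : m + 1 - 1 = (m-1) + 1 := by omega
      rw [this, Finset.sum_range_succ, ih hm, harm_succ]
      have : ((m:ℝ) - 1 + 2) = (m:ℝ) + 1 := by ring
      push_cast [Nat.cast_sub hm]
      ring

-- S1
lemma S1 (n : ℕ) : ∑ m ∈ Finset.range n, (harm n - harm m) = n := by
  induction n with
  | zero => simp
  | succ t ih =>
    rw [Finset.sum_range_succ, harm_succ]
    have hc : ∀ m ∈ Finset.range t, harm t + 1/((t:ℝ)+1) - harm m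
        = (harm t - harm m) + 1/((t:ℝ)+1) := by intro m _; ring
    rw [Finset.sum_congr rfl hc, Finset.sum_add_distrib, ih, Finset.sum_const,
      Finset.card_range, nsmul_eq_mul]
    have ht : ((t:ℝ)+1) ≠ 0 := by positivity
    push_cast
    field_simp
    ring

-- S2
lemma S2 (n : ℕ) : ∑ m ∈ Finset.range n, (harm n - harm m)^2 = 2*n - harm n := by
  induction n with
  | zero => simp [harm]
  | succ t ih =>
    rw [Finset.sum_range_succ, harm_succ]
    have hc : ∀ m ∈ Finset.range t, (harm t + 1/((t:ℝ)+1) - harm m)^2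
        = (harm t - harm m)^2 + 2/((t:ℝ)+1) * (harm t - harm m) + (1/((t:ℝ)+1))^2 := by
      intro m _; ring
    rw [Finset.sum_congr rfl hc, Finset.sum_add_distrib, Finset.sum_add_distrib,
      ih, ← Finset.mul_sum, S1, Finset.sum_const, Finset.card_range, nsmul_eq_mul]
    have ht : ((t:ℝ)+1) ≠ 0 := by positivity
    push_cast
    field_simp
    ring


noncomputable def gfun (n k : ℕ) (x : ℝ) : ℝ :=
  ordStatCDF n k (1 - Real.exp (-x)) - (1 - Real.exp (-x))

lemma geom_aux (a : ℝ) (n : ℕ) (hn : 1 ≤ n) :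
    a ^ n - a = -∑ j ∈ Finset.range (n-1), a ^ (j+1) * (1 - a) := by
  obtain ⟨m, rfl⟩ : ∃ m, n = m + 1 := ⟨n - 1, by omega⟩
  simp only [Nat.add_sub_cancel]
  induction m with
  | zero => simp
  | succ m ih =>
    rw [Finset.sum_range_succ]
    have : a ^ (m + 1 + 1) - a = (a ^ (m+1) - a) - a^(m+1)*(1-a) := by ring
    rw [this, ih (by omega)]
    ring

lemma gfun_eq (n k : ℕ) (hk : 1 ≤ k) (hkn : k ≤ n) (x : ℝ) :
    gfun n k x = (∑ i ∈ Finset.Icc k (n-1),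
        (n.choose i : ℝ) * (1 - Real.exp (-x)) ^ i * Real.exp (-x) ^ (n - i))
      - ∑ j ∈ Finset.range (n-1), (1 - Real.exp (-x)) ^ (j+1) * Real.exp (-x) ^ 1 := by
  unfold gfun ordStatCDF
  set p := 1 - Real.exp (-x) with hp
  have hq : 1 - p = Real.exp (-x) := by rw [hp]; ring
  rw [hq]
  have hsplit : Finset.Icc k n = insert n (Finset.Icc k (n-1)) := by
    ext i; simp [Finset.mem_Icc, Finset.mem_insert]; omega
  rw [hsplit, Finset.sum_insert (by simp [Finset.mem_Icc]; omega)]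
  have hterm : (n.choose n : ℝ) * p ^ n * Real.exp (-x) ^ (n - n) = p ^ n := by
    simp
  rw [hterm]
  have := geom_aux p n (le_trans hk hkn)
  have hq2 : ∀ j : ℕ, p ^ (j+1) * Real.exp (-x) ^ 1 = p ^ (j+1) * (1 - p) := by
    intro j; rw [hq, pow_one]
  simp_rw [hq2]
  linarith [this]

lemma gfun_integrableOn (n k : ℕ) (hk : 1 ≤ k) (hkn : k ≤ n) :
    IntegrableOn (gfun n k) (Set.Ioi 0) := by
  have heq : Set.EqOn (gfun n k) (fun x => (∑ i ∈ Finset.Icc k (n-1),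
        (n.choose i : ℝ) * ((1 - Real.exp (-x)) ^ i * Real.exp (-x) ^ (n - i)))
      - ∑ j ∈ Finset.range (n-1), (1 - Real.exp (-x)) ^ (j+1) * Real.exp (-x) ^ 1) (Set.Ioi 0) := by
    intro x _
    rw [gfun_eq n k hk hkn x]
    congr 1
    exact Finset.sum_congr rfl (fun i _ => by ring)
  apply IntegrableOn.congr_fun _ heq.symm measurableSet_Ioi
  apply Integrable.sub
  · apply integrable_finset_sum
    intro i hi
    simp only [Finset.mem_Icc] at hi
    exact ((phi_int i (n-i) (by omega)).const_mul _)
  · apply integrable_finset_sum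
    intro j hj
    exact phi_int (j+1) 1 le_rfl

lemma gfun_integral (n k : ℕ) (hk : 1 ≤ k) (hkn : k ≤ n) :
    ∫ x in Set.Ioi (0:ℝ), gfun n k x
      = (∑ i ∈ Finset.Icc k (n-1), (1 / (n - i : ℕ) : ℝ))
        - ∑ j ∈ Finset.range (n-1), (1 / (j+2) : ℝ) := by
  rw [MeasureTheory.setIntegral_congr_fun measurableSet_Ioi
    (fun x _ => gfun_eq n k hk hkn x)]
  rw [MeasureTheory.integral_sub]
  · congr 1
    · rw [MeasureTheory.integral_finset_sum]
      · apply Finset.sum_congr rfl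
        intro i hi
        simp only [Finset.mem_Icc] at hi
        have h1 : 1 ≤ n - i := by omega
        simp_rw [mul_assoc, MeasureTheory.integral_const_mul]
        rw [phi_val i (n-i) h1]
        have hin : i + (n - i) = n := by omega
        rw [hin]
        have hfac : (n.choose i) * i.factorial * (n-i).factorial = n.factorial :=
          Nat.choose_mul_factorial_mul_factorial (by omega)
        have hfp : (n-i).factorial = (n-i) * ((n-i)-1).factorial := by
          obtain ⟨m', hm'⟩ : ∃ m', n - i = m' + 1 := ⟨n-i-1, by omega⟩
          rw [hm']; simp [Nat.factorial_succ]
        rw [hfp] at hfac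
        have hfacR : (n.choose i : ℝ) * i.factorial * ((n-i : ℕ) * ((n-i)-1).factorial) = n.factorial := by
          exact_mod_cast congrArg (Nat.cast : ℕ → ℝ) hfac
        have h0 : ((n.factorial : ℕ) : ℝ) ≠ 0 := by exact_mod_cast n.factorial_ne_zero
        have h1' : ((n - i : ℕ) : ℝ) ≠ 0 := by
          have : 0 < n - i := by omega
          positivity
        field_simp
        nlinarith [hfacR]
      · intro i hi
        simp only [Finset.mem_Icc] at hi
        simp_rw [mul_assoc]
        exact ((phi_int i (n-i) (by omega)).const_mul _)
    · rw [MeasureTheory.integral_finset_sum]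
      · apply Finset.sum_congr rfl
        intro j hj
        rw [phi_val (j+1) 1 le_rfl]
        have hfs : ((j+1+1).factorial : ℝ) = ((j:ℝ)+2) * (j+1).factorial := by
          rw [Nat.factorial_succ]; push_cast; ring
        rw [hfs]
        have h1 : ((j+1).factorial : ℝ) ≠ 0 := by exact_mod_cast (j+1).factorial_ne_zero
        have h2 : ((j:ℝ)+2) ≠ 0 := by positivity
        norm_num
        field_simp
      · intro j hj
        exact phi_int (j+1) 1 le_rfl
  · apply integrable_finset_sum
    intro i hi
    simp only [Finset.mem_Icc] at hi
    simp_rw [mul_assoc]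
    exact ((phi_int i (n-i) (by omega)).const_mul _)
  · apply integrable_finset_sum
    intro j hj
    exact phi_int (j+1) 1 le_rfl

lemma final_id (n : ℕ) (hn : 1 ≤ n) :
    ∑ k ∈ Finset.Icc 1 n, (1 + harm (n-k) - harm n)^2 = n - harm n := by
  have hre : ∑ k ∈ Finset.Icc 1 n, (1 + harm (n-k) - harm n)^2
      = ∑ m ∈ Finset.range n, (1 + harm m - harm n)^2 := by
    apply Finset.sum_nbij' (fun k => n - k) (fun m => n - m)
    · intro a ha; simp at ha ⊢; omega
    · intro a ha; simp at ha ⊢; omega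
    · intro a ha; simp at ha; omega
    · intro a ha; simp at ha; omega
    · intro a ha; rfl
  rw [hre]
  have hc : ∀ m ∈ Finset.range n, (1 + harm m - harm n)^2
      = (harm n - harm m)^2 - 2*(harm n - harm m) + 1 := by intro m _; ring
  rw [Finset.sum_congr rfl hc]
  rw [Finset.sum_add_distrib, Finset.sum_sub_distrib, S2, ← Finset.mul_sum, S1,
    Finset.sum_const, Finset.card_range, nsmul_eq_mul, mul_one]
  ring

/-- For Baker's bivariate distribution `H_+^{(n)}` with standard exponential marginals
`F(x) = 1 - e^{-x}` (for which `E X = Var X = 1`), the Pearson correlation coefficient,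
computed via Hoeffding's formula `ρ_n = ∫∫ (H_+^{(n)}(x,y) - F(x)F(y)) dx dy / √(Var X Var Y)`,
equals `1 - (1/n) ∑_{k=1}^n 1/k`. -/
theorem baker_exponential_correlation (n : ℕ) (hn : 1 ≤ n)
    (F : ℝ → ℝ) (hF : ∀ x, F x = 1 - Real.exp (-x))
    (H : ℝ → ℝ → ℝ)
    (hH : ∀ x y, H x y = (1 / n : ℝ) * ∑ k ∈ Finset.Icc 1 n,
      ordStatCDF n k (F x) * ordStatCDF n k (F y)) :
    (∫ p in Set.Ioi (0:ℝ) ×ˢ Set.Ioi (0:ℝ), (H p.1 p.2 - F p.1 * F p.2)) / Real.sqrt (1 * 1) =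
      1 - (1 / n : ℝ) * ∑ k ∈ Finset.Icc 1 n, (1 / k : ℝ) := by

  have hn0 : (n:ℝ) ≠ 0 := by positivity
  -- pointwise identity
  have hpt : ∀ x y : ℝ, H x y - F x * F y
      = (1/n : ℝ) * ∑ k ∈ Finset.Icc 1 n, gfun n k x * gfun n k y := by
    intro x y
    have e1 := sum_ordStatCDF n hn (1 - Real.exp (-x))
    have e2 := sum_ordStatCDF n hn (1 - Real.exp (-y))
    rw [hH, hF x, hF y]
    set px := 1 - Real.exp (-x)
    set py := 1 - Real.exp (-y)
    have expand : ∀ k ∈ Finset.Icc 1 n, gfun n k x * gfun n k y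
        = ordStatCDF n k px * ordStatCDF n k py - px * ordStatCDF n k py
          - ordStatCDF n k px * py + px * py := by
      intro k _
      unfold gfun
      ring
    rw [Finset.sum_congr rfl expand]
    simp only [Finset.sum_add_distrib, Finset.sum_sub_distrib, ← Finset.mul_sum,
      ← Finset.sum_mul, e1, e2, Finset.sum_const, Nat.card_Icc, nsmul_eq_mul]
    have hcard : ((n + 1 - 1 : ℕ) : ℝ) = (n : ℝ) := by norm_num
    rw [hcard]
    field_simp
    ring
  -- rewrite integrand
  have hint : (∫ p in Set.Ioi (0:ℝ) ×ˢ Set.Ioi (0:ℝ), (H p.1 p.2 - F p.1 * F p.2))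
      = (1/n : ℝ) * ∑ k ∈ Finset.Icc 1 n,
          (∫ x in Set.Ioi (0:ℝ), gfun n k x) * (∫ y in Set.Ioi (0:ℝ), gfun n k y) := by
    simp_rw [hpt]
    rw [MeasureTheory.integral_const_mul]
    congr 1
    rw [MeasureTheory.Measure.volume_eq_prod, ← MeasureTheory.Measure.prod_restrict]
    rw [MeasureTheory.integral_finset_sum]
    · exact Finset.sum_congr rfl (fun k _ =>
        MeasureTheory.integral_prod_mul (gfun n k) (gfun n k))
    · intro k hk
      simp only [Finset.mem_Icc] at hk
      exact (gfun_integrableOn n k hk.1 hk.2).mul_prod (gfun_integrableOn n k hk.1 hk.2)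
  rw [hint]
  -- values
  have hval : ∀ k ∈ Finset.Icc 1 n,
      (∫ x in Set.Ioi (0:ℝ), gfun n k x) = 1 + harm (n-k) - harm n := by
    intro k hk
    simp only [Finset.mem_Icc] at hk
    rw [gfun_integral n k hk.1 hk.2, claimA n k hk.1 hk.2, claimB n hn]
    ring
  have hsum : ∑ k ∈ Finset.Icc 1 n,
      (∫ x in Set.Ioi (0:ℝ), gfun n k x) * (∫ y in Set.Ioi (0:ℝ), gfun n k y)
      = (n : ℝ) - harm n := by
    rw [Finset.sum_congr rfl (fun k hk => by rw [hval k hk, ← sq])]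
    exact final_id n hn
  rw [hsum]
  rw [one_mul, Real.sqrt_one, div_one]
  unfold harm
  field_simp
end

section
/- For each fixed (t,s) ∈ [0,1]², lim_{n→∞} t·s·[1 + α(1 - t^{1/n})(1 - s^{1/n})]^n = t·s; that is, the copula of the maxima of an FGM sample converges pointwise to the independence copula Π(t,s) = ts. -/
open Filter

/-- If `n * u n → 0` and `1 + u n > 0`, then `(1 + u n)^n → 1`. -/
lemma aux_pow_tendsto_one (u : ℕ → ℝ) (hpos : ∀ n, 0 < 1 + u n)
    (h : Tendsto (fun n : ℕ => (n : ℝ) * u n) atTop (nhds 0)) :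
    Tendsto (fun n : ℕ => (1 + u n) ^ n) atTop (nhds 1) := by
  have hu : Tendsto u atTop (nhds 0) := by
    have h1 : Tendsto (fun n : ℕ => ((n : ℝ) * u n) * (1 / n)) atTop (nhds 0) := by
      simpa using h.mul tendsto_one_div_atTop_nhds_zero_nat
    apply h1.congr'
    filter_upwards [eventually_ge_atTop 1] with n hn
    have : (n : ℝ) ≠ 0 := Nat.cast_ne_zero.mpr (by omega)
    field_simp
  have hden : Tendsto (fun n : ℕ => 1 + u n) atTop (nhds 1) := by
    have := (tendsto_const_nhds (x := (1:ℝ)) (f := (atTop : Filter ℕ))).add hu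
    simpa using this
  -- n * log (1 + u n) → 0 by squeeze
  have hlog : Tendsto (fun n : ℕ => (n : ℝ) * Real.log (1 + u n)) atTop (nhds 0) := by
    have hlow : Tendsto (fun n : ℕ => ((n : ℝ) * u n) / (1 + u n)) atTop (nhds 0) := by
      have := h.div hden one_ne_zero
      rw [zero_div] at this
      exact this
    refine tendsto_of_tendsto_of_tendsto_of_le_of_le hlow h ?_ ?_
    · intro n
      have hne : (1 + u n) ≠ 0 := (hpos n).ne'
      have hlb : 1 - (1 + u n)⁻¹ ≤ Real.log (1 + u n) :=
        Real.one_sub_inv_le_log_of_pos (hpos n)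
      have heq : 1 - (1 + u n)⁻¹ = u n / (1 + u n) := by
        rw [eq_div_iff hne, sub_mul, inv_mul_cancel₀ hne]
        ring
      have h2 : u n / (1 + u n) ≤ Real.log (1 + u n) := heq ▸ hlb
      calc (n : ℝ) * u n / (1 + u n) = (n : ℝ) * (u n / (1 + u n)) := by ring
        _ ≤ (n : ℝ) * Real.log (1 + u n) :=
          mul_le_mul_of_nonneg_left h2 (Nat.cast_nonneg n)
    · intro n
      have := Real.log_le_sub_one_of_pos (hpos n)
      have h2 : Real.log (1 + u n) ≤ u n := by linarith
      exact mul_le_mul_of_nonneg_left h2 (Nat.cast_nonneg n)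
  have := (Real.continuous_exp.tendsto 0).comp hlog
  rw [Real.exp_zero] at this
  apply this.congr
  intro n
  simp only [Function.comp_apply]
  rw [← Real.log_pow, Real.exp_log (pow_pos (hpos n) n)]

/-- For each fixed `(t,s) ∈ [0,1]²` and `-1 ≤ α ≤ 1`,
`lim_{n→∞} t·s·[1 + α(1 - t^{1/n})(1 - s^{1/n})]^n = t·s`: the copula of the maxima of an
FGM sample converges pointwise to the independence copula `Π(t,s) = ts`. -/
theorem FGM_maxima_copula_tendsto_indep (α : ℝ) (hα : α ∈ Set.Icc (-1 : ℝ) 1)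
    (t s : ℝ) (ht : t ∈ Set.Icc (0:ℝ) 1) (hs : s ∈ Set.Icc (0:ℝ) 1) :
    Tendsto (fun n : ℕ =>
        t * s * (1 + α * (1 - t ^ ((1 : ℝ) / n)) * (1 - s ^ ((1 : ℝ) / n))) ^ n)
      atTop (nhds (t * s)) := by
  obtain ⟨ht0, ht1⟩ := ht
  obtain ⟨hs0, hs1⟩ := hs
  rcases eq_or_lt_of_le ht0 with ht0 | ht0
  · simp [← ht0]
  rcases eq_or_lt_of_le hs0 with hs0 | hs0
  · simp [← hs0]
  -- now 0 < t ≤ 1, 0 < s ≤ 1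
  have hle : ∀ n : ℕ, (1 : ℝ) / n ≤ 1 := by
    intro n
    rcases Nat.eq_zero_or_pos n with h | h
    · simp [h]
    · have hn : (0:ℝ) < n := by exact_mod_cast h
      rw [div_le_one hn]
      exact_mod_cast Nat.one_le_iff_ne_zero.mpr (by omega)
  set u : ℕ → ℝ := fun n => α * (1 - t ^ ((1 : ℝ) / n)) * (1 - s ^ ((1 : ℝ) / n)) with hu
  have hta : ∀ n : ℕ, 0 ≤ 1 - t ^ ((1 : ℝ) / n) ∧ 1 - t ^ ((1 : ℝ) / n) ≤ 1 - t := by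
    intro n
    constructor
    · have := Real.rpow_le_one ht0.le ht1 (by positivity : (0:ℝ) ≤ 1 / n)
      linarith
    · have := Real.rpow_le_rpow_of_exponent_ge ht0 ht1 (hle n)
      rw [Real.rpow_one] at this
      linarith
  have hsa : ∀ n : ℕ, 0 ≤ 1 - s ^ ((1 : ℝ) / n) ∧ 1 - s ^ ((1 : ℝ) / n) ≤ 1 - s := by
    intro n
    constructor
    · have := Real.rpow_le_one hs0.le hs1 (by positivity : (0:ℝ) ≤ 1 / n)
      linarith
    · have := Real.rpow_le_rpow_of_exponent_ge hs0 hs1 (hle n)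
      rw [Real.rpow_one] at this
      linarith
  have hpos : ∀ n, 0 < 1 + u n := by
    intro n
    have h1 := hta n
    have h2 := hsa n
    have habs : |u n| ≤ (1 - t ^ ((1 : ℝ) / n)) * (1 - s ^ ((1 : ℝ) / n)) := by
      rw [hu]
      simp only []
      rw [show α * (1 - t ^ ((1:ℝ)/n)) * (1 - s ^ ((1:ℝ)/n))
        = α * ((1 - t ^ ((1:ℝ)/n)) * (1 - s ^ ((1:ℝ)/n))) by ring, abs_mul]
      calc |α| * |(1 - t ^ ((1:ℝ)/n)) * (1 - s ^ ((1:ℝ)/n))|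
          ≤ 1 * |(1 - t ^ ((1:ℝ)/n)) * (1 - s ^ ((1:ℝ)/n))| := by
            apply mul_le_mul_of_nonneg_right (abs_le.mpr ⟨hα.1, hα.2⟩) (abs_nonneg _)
        _ = (1 - t ^ ((1:ℝ)/n)) * (1 - s ^ ((1:ℝ)/n)) := by
            rw [one_mul, abs_of_nonneg (mul_nonneg h1.1 h2.1)]
    rcases Nat.eq_zero_or_pos n with h | h
    · rw [hu]
      norm_num [h]
    · have hlt : (1 - t ^ ((1 : ℝ) / n)) * (1 - s ^ ((1 : ℝ) / n)) < 1 := by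
        have htn : 0 < t ^ ((1 : ℝ) / n) := Real.rpow_pos_of_pos ht0 _
        have hsn : 0 < s ^ ((1 : ℝ) / n) := Real.rpow_pos_of_pos hs0 _
        calc (1 - t ^ ((1 : ℝ) / n)) * (1 - s ^ ((1 : ℝ) / n))
            ≤ (1 - t ^ ((1 : ℝ) / n)) * 1 :=
              mul_le_mul_of_nonneg_left (by linarith) h1.1
          _ < 1 := by linarith
      have := abs_le.mp habs
      nlinarith [this.1, this.2]
  -- n * (1 - t^{1/n}) ≤ -log t
  have hbound : ∀ n : ℕ, (n : ℝ) * (1 - t ^ ((1 : ℝ) / n)) ≤ -Real.log t := by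
    intro n
    rcases Nat.eq_zero_or_pos n with h | h
    · have hlt := Real.log_nonpos ht0.le ht1
      simp [h]; linarith
    · have hn : (0:ℝ) < n := by exact_mod_cast h
      have hexp : t ^ ((1 : ℝ) / n) = Real.exp (Real.log t / n) := by
        rw [Real.rpow_def_of_pos ht0, mul_one_div]
      have h1 : 1 + Real.log t / n ≤ Real.exp (Real.log t / n) := by
        linarith [Real.add_one_le_exp (Real.log t / n)]
      rw [hexp]
      have h3 : 1 - Real.exp (Real.log t / n) ≤ -(Real.log t / n) := by linarith
      calc (n : ℝ) * (1 - Real.exp (Real.log t / n)) ≤ (n : ℝ) * (-(Real.log t / n)) :=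
            mul_le_mul_of_nonneg_left h3 (le_of_lt hn)
        _ = -Real.log t := by field_simp
  -- s^{1/n} → 1
  have hs_tendsto : Tendsto (fun n : ℕ => 1 - s ^ ((1 : ℝ) / n)) atTop (nhds 0) := by
    have h1 : Tendsto (fun n : ℕ => (1 : ℝ) / n) atTop (nhds 0) :=
      tendsto_one_div_atTop_nhds_zero_nat
    have h2 : Tendsto (fun n : ℕ => s ^ ((1 : ℝ) / n)) atTop (nhds 1) := by
      have hc : ContinuousAt (fun y : ℝ => s ^ y) 0 :=
        Real.continuousAt_const_rpow hs0.ne'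
      have := hc.tendsto.comp h1
      simpa [Function.comp_def] using this
    have := (tendsto_const_nhds (x := (1:ℝ)) (f := (atTop : Filter ℕ))).sub h2
    simpa using this
  -- n * u n → 0 by squeeze via norm
  have hnu : Tendsto (fun n : ℕ => (n : ℝ) * u n) atTop (nhds 0) := by
    have hb : ∀ n : ℕ, ‖(n : ℝ) * u n‖ ≤ (-Real.log t) * |1 - s ^ ((1 : ℝ) / n)| := by
      intro n
      have h1 := hta n
      have h2 := hsa n
      rw [hu]
      simp only []
      have hnt : 0 ≤ (n : ℝ) * (1 - t ^ ((1:ℝ)/n)) := mul_nonneg (Nat.cast_nonneg n) h1.1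
      calc ‖(n : ℝ) * (α * (1 - t ^ ((1:ℝ)/n)) * (1 - s ^ ((1:ℝ)/n)))‖
          = |α| * ((n : ℝ) * (1 - t ^ ((1:ℝ)/n))) * |1 - s ^ ((1:ℝ)/n)| := by
            rw [Real.norm_eq_abs]
            rw [show (n : ℝ) * (α * (1 - t ^ ((1:ℝ)/n)) * (1 - s ^ ((1:ℝ)/n)))
              = (α * ((n:ℝ) * (1 - t ^ ((1:ℝ)/n)))) * (1 - s ^ ((1:ℝ)/n)) by ring]
            rw [abs_mul, abs_mul, abs_of_nonneg hnt]
        _ ≤ 1 * (-Real.log t) * |1 - s ^ ((1:ℝ)/n)| := by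
            apply mul_le_mul_of_nonneg_right _ (abs_nonneg _)
            apply mul_le_mul (abs_le.mpr ⟨hα.1, hα.2⟩) (hbound n) hnt zero_le_one
        _ = (-Real.log t) * |1 - s ^ ((1:ℝ)/n)| := by ring
    have hg : Tendsto (fun n : ℕ => (-Real.log t) * |1 - s ^ ((1 : ℝ) / n)|) atTop
        (nhds 0) := by
      have habs : Tendsto (fun n : ℕ => |1 - s ^ ((1 : ℝ) / n)|) atTop (nhds 0) := by
        simpa using hs_tendsto.abs
      have := (tendsto_const_nhds (x := -Real.log t) (f := (atTop : Filter ℕ))).mul habs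
      simpa using this
    exact squeeze_zero_norm hb hg
  have hmain := aux_pow_tendsto_one u hpos hnu
  have hconst : Tendsto (fun _ : ℕ => t * s) atTop (nhds (t * s)) := tendsto_const_nhds
  have h := hconst.mul hmain
  rw [mul_one] at h
  exact h
end

section
/- If the underlying copula is the Gumbel logistic copula C(u,v) = uv/(u + v - uv), then the copula of the componentwise maxima of an i.i.d. sample of size n is C_{n:n}(t,s) = ts / (t^{1/n} + s^{1/n} - t^{1/n}s^{1/n})^n, and for each fixed (t,s) ∈ (0,1]², lim_{n→∞} C_{n:n}(t,s) = ts. -/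
open Filter

/-- If the underlying copula is the Gumbel logistic copula `C(u,v) = uv/(u+v-uv)`, then the
copula of the componentwise maxima of an i.i.d. sample of size `n`, namely
`C_{n:n}(t,s) = C(t^{1/n}, s^{1/n})^n`, equals `ts/(t^{1/n}+s^{1/n}-t^{1/n}s^{1/n})^n`, and
for each fixed `(t,s) ∈ (0,1]²`, `lim_{n→∞} C_{n:n}(t,s) = ts`. -/
theorem gumbel_maxima_copula (C : ℝ → ℝ → ℝ)
    (hC : ∀ u v, C u v = u * v / (u + v - u * v))
    (t s : ℝ) (ht : t ∈ Set.Ioc (0:ℝ) 1) (hs : s ∈ Set.Ioc (0:ℝ) 1) :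
    (∀ n : ℕ, 1 ≤ n →
      (C (t ^ ((1 : ℝ) / n)) (s ^ ((1 : ℝ) / n))) ^ n =
        t * s / (t ^ ((1 : ℝ) / n) + s ^ ((1 : ℝ) / n)
          - t ^ ((1 : ℝ) / n) * s ^ ((1 : ℝ) / n)) ^ n) ∧
    Tendsto (fun n : ℕ => (C (t ^ ((1 : ℝ) / n)) (s ^ ((1 : ℝ) / n))) ^ n)
      atTop (nhds (t * s)) := by
  obtain ⟨ht0, ht1⟩ := ht
  obtain ⟨hs0, hs1⟩ := hs
  have key : ∀ n : ℕ, 1 ≤ n →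
      (C (t ^ ((1 : ℝ) / n)) (s ^ ((1 : ℝ) / n))) ^ n =
        t * s / (t ^ ((1 : ℝ) / n) + s ^ ((1 : ℝ) / n)
          - t ^ ((1 : ℝ) / n) * s ^ ((1 : ℝ) / n)) ^ n := by
    intro n hn
    have hn0 : (n : ℝ) ≠ 0 := Nat.cast_ne_zero.2 (by omega)
    set a := t ^ ((1 : ℝ) / n) with ha
    set b := s ^ ((1 : ℝ) / n) with hb
    have hat : a ^ n = t := by
      rw [ha, ← Real.rpow_natCast (t ^ ((1:ℝ)/n)) n, ← Real.rpow_mul ht0.le]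
      field_simp
      simp
    have hbs : b ^ n = s := by
      rw [hb, ← Real.rpow_natCast (s ^ ((1:ℝ)/n)) n, ← Real.rpow_mul hs0.le]
      field_simp
      simp
    rw [hC, div_pow, mul_pow, hat, hbs]
  refine ⟨key, ?_⟩
  -- notation
  set a : ℕ → ℝ := fun n => t ^ ((1 : ℝ) / n) with ha
  set b : ℕ → ℝ := fun n => s ^ ((1 : ℝ) / n) with hb
  set D : ℕ → ℝ := fun n => a n + b n - a n * b n with hD
  set c : ℝ := Real.log t * Real.log s with hc
  have hlt : Real.log t ≤ 0 := Real.log_nonpos ht0.le ht1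
  have hls : Real.log s ≤ 0 := Real.log_nonpos hs0.le hs1
  have hc0 : 0 ≤ c := by rw [hc]; nlinarith
  have ha0 : ∀ n, 0 < a n := fun n => Real.rpow_pos_of_pos ht0 _
  have hb0 : ∀ n, 0 < b n := fun n => Real.rpow_pos_of_pos hs0 _
  have ha1 : ∀ n, a n ≤ 1 := fun n => Real.rpow_le_one ht0.le ht1 (by positivity)
  have hb1 : ∀ n, b n ≤ 1 := fun n => Real.rpow_le_one hs0.le hs1 (by positivity)
  have hDe : ∀ n, D n = a n + b n - a n * b n := fun n => rfl
  have hD0 : ∀ n, 0 < D n := by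
    intro n
    rw [hDe]
    nlinarith [mul_nonneg (ha0 n).le (sub_nonneg.2 (hb1 n)), hb0 n, ha0 n]
  have hD1 : ∀ n, D n ≤ 1 := by
    intro n
    rw [hDe]
    nlinarith [mul_nonneg (sub_nonneg.2 (ha1 n)) (sub_nonneg.2 (hb1 n))]
  -- lower bound on D
  have hDlow : ∀ n : ℕ, 1 ≤ n → 1 - c / (n:ℝ)^2 ≤ D n := by
    intro n hn
    have hnpos : (0:ℝ) < n := by exact_mod_cast Nat.pos_of_ne_zero (by omega)
    have hax : 1 + Real.log t / n ≤ a n := by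
      have : a n = Real.exp (Real.log t * ((1:ℝ)/n)) := by
        simp only [ha]
        rw [Real.rpow_def_of_pos ht0]
      rw [this]
      have := Real.add_one_le_exp (Real.log t * ((1:ℝ)/n))
      have he : Real.log t * ((1:ℝ)/n) = Real.log t / n := by ring
      linarith [he ▸ this]
    have hbx : 1 + Real.log s / n ≤ b n := by
      have : b n = Real.exp (Real.log s * ((1:ℝ)/n)) := by
        simp only [hb]
        rw [Real.rpow_def_of_pos hs0]
      rw [this]
      have := Real.add_one_le_exp (Real.log s * ((1:ℝ)/n))
      have he : Real.log s * ((1:ℝ)/n) = Real.log s / n := by ring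
      linarith [he ▸ this]
    have h1a : 1 - a n ≤ -Real.log t / n := by rw [neg_div]; linarith
    have h1b : 1 - b n ≤ -Real.log s / n := by rw [neg_div]; linarith
    have hna : 0 ≤ 1 - a n := sub_nonneg.2 (ha1 n)
    have hnb : 0 ≤ 1 - b n := sub_nonneg.2 (hb1 n)
    have hprod : (1 - a n) * (1 - b n) ≤ c / (n:ℝ)^2 := by
      have h2 : (1 - a n) * (1 - b n) ≤ (-Real.log t / n) * (-Real.log s / n) :=
        mul_le_mul h1a h1b hnb (div_nonneg (by linarith) hnpos.le)
      have hne : (n:ℝ) ≠ 0 := hnpos.ne'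
      have h4 : (-Real.log t / n) * (-Real.log s / n) = c / (n:ℝ)^2 := by
        rw [hc, div_mul_div_comm, neg_mul_neg, sq]
      linarith [h4 ▸ h2]
    have hde : 1 - D n = (1 - a n) * (1 - b n) := by rw [hDe]; ring
    linarith [hde ▸ hprod]
  -- squeeze on D^n
  have hup : ∀ n : ℕ, D n ^ n ≤ 1 := fun n => pow_le_one₀ (hD0 n).le (hD1 n)
  have hlow : ∀ n : ℕ, 1 ≤ n → 1 - c / n ≤ D n ^ n := by
    intro n hn
    have hnpos : (0:ℝ) < n := by exact_mod_cast Nat.pos_of_ne_zero (by omega)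
    have hber : 1 + (n:ℝ) * (D n - 1) ≤ (1 + (D n - 1)) ^ n :=
      one_add_mul_le_pow (by linarith [hD0 n]) n
    have h1 : (1 + (D n - 1)) ^ n = D n ^ n := by ring_nf
    have h2 : -(c / (n:ℝ)^2) ≤ D n - 1 := by linarith [hDlow n hn]
    have h3 : (n:ℝ) * (-(c / (n:ℝ)^2)) ≤ (n:ℝ) * (D n - 1) :=
      mul_le_mul_of_nonneg_left h2 hnpos.le
    have hne : (n:ℝ) ≠ 0 := hnpos.ne'
    have h4 : (n:ℝ) * (-(c / (n:ℝ)^2)) = -(c / n) := by field_simp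
    rw [h1] at hber
    rw [h4] at h3
    calc 1 - c / (n:ℝ) = 1 + (-(c / (n:ℝ))) := by ring
      _ ≤ 1 + (n:ℝ) * (D n - 1) := by exact add_le_add_right h3 1
      _ ≤ D n ^ n := hber
  have hDn : Tendsto (fun n : ℕ => D n ^ n) atTop (nhds 1) := by
    refine tendsto_of_tendsto_of_tendsto_of_le_of_le'
      (g := fun n : ℕ => 1 - c / n) (h := fun _ : ℕ => (1:ℝ)) ?_ tendsto_const_nhds ?_ ?_
    · have : Tendsto (fun n : ℕ => c / n) atTop (nhds 0) := by
        simpa using tendsto_const_nhds.div_atTop (tendsto_natCast_atTop_atTop (R := ℝ))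
      simpa using tendsto_const_nhds.sub this
    · filter_upwards [eventually_ge_atTop 1] with n hn using hlow n hn
    · filter_upwards with n using hup n
  have hmain : Tendsto (fun n : ℕ => t * s / D n ^ n) atTop (nhds (t * s)) := by
    have h : Tendsto (fun n : ℕ => (t * s) / D n ^ n) atTop (nhds ((t * s) / 1)) :=
      Tendsto.div tendsto_const_nhds hDn one_ne_zero
    simpa using h
  refine hmain.congr' ?_
  filter_upwards [eventually_ge_atTop 1] with n hn
  exact (key n hn).symm
end

section
/- With the notation of the multinomial formula for P(U_{r:n} ≤ u, V_{r:n} ≤ v) (the r = s case), the sum decomposes as: P(U_{r:n} ≤ u, V_{r:n} ≤ v) = Σ_{i=r}^n binom(n,i) C^i (v - C + C̄)^{n-i} + Σ_{j=r}^n binom(n,j) C^j (u - C + C̄)^{n-j} - Σ_{i=r}^n binom(n,i) C^i C̄^{n-i} + Σ_{i=r}^n Σ_{j=r}^n Σ_{k ≠ i, k ≠ j} c(n,k;i,j) C^k (u-C)^{i-k} (v-C)^{j-k} C̄^{n-i-j+k}, where C = C(u,v), C̄ = 1 - u - v + C(u,v), and c(n,k;i,j) = n!/(k!(i-k)!(j-k)!(n-i-j+k)!).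 -/
open Finset

noncomputable def multinomCoef (n k i j : ℕ) : ℝ :=
  (n.factorial : ℝ) /
    ((k.factorial : ℝ) * ((i - k).factorial : ℝ) * ((j - k).factorial : ℝ) *
      ((n + k - i - j).factorial : ℝ))

lemma coef_diag {n i j : ℕ} (hij : i ≤ j) (hjn : j ≤ n) :
    multinomCoef n i i j = (n.choose i : ℝ) * ((n - i).choose (j - i) : ℝ) := by
  unfold multinomCoef
  rw [Nat.cast_choose ℝ (hij.trans hjn), Nat.cast_choose ℝ (by omega : j - i ≤ n - i)]
  have h1 : i - i = 0 := by omega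
  have h2 : n + i - i - j = n - j := by omega
  have h3 : n - i - (j - i) = n - j := by omega
  rw [h1, h2, h3]
  have := Nat.factorial_ne_zero i
  have := Nat.factorial_ne_zero (j - i)
  have := Nat.factorial_ne_zero (n - j)
  have := Nat.factorial_ne_zero (n - i)
  field_simp [Nat.factorial]
  ring

lemma coef_diag' {n i j : ℕ} (hji : j ≤ i) (hin : i ≤ n) :
    multinomCoef n j i j = (n.choose j : ℝ) * ((n - j).choose (i - j) : ℝ) := by
  unfold multinomCoef
  rw [Nat.cast_choose ℝ (hji.trans hin), Nat.cast_choose ℝ (by omega : i - j ≤ n - j)]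
  have h1 : j - j = 0 := by omega
  have h2 : n + j - i - j = n - i := by omega
  have h3 : n - j - (i - j) = n - i := by omega
  rw [h1, h2, h3]
  have := Nat.factorial_ne_zero j
  have := Nat.factorial_ne_zero (i - j)
  have := Nat.factorial_ne_zero (n - i)
  have := Nat.factorial_ne_zero (n - j)
  field_simp [Nat.factorial]
  ring

-- binomial sum lemma
lemma binom_sum {n i : ℕ} (hin : i ≤ n) (c x y : ℝ) :
    ∑ j ∈ Icc i n, (c : ℝ) * ((n - i).choose (j - i) : ℝ) * x ^ (j - i) * y ^ (n - j) =
      c * (x + y) ^ (n - i) := by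
  rw [← Finset.Ico_add_one_right_eq_Icc, Finset.sum_Ico_eq_sum_range]
  have hn : n + 1 - i = (n - i) + 1 := by omega
  rw [hn, add_pow, Finset.mul_sum]
  apply Finset.sum_congr rfl
  intro m hm
  simp only [Finset.mem_range] at hm
  have h1 : i + m - i = m := by omega
  have h2 : n - (i + m) = n - i - m := by omega
  rw [h1, h2]
  ring

/-- Lemma 1 of the paper: the multinomial sum for `P(U_{r:n} ≤ u, V_{r:n} ≤ v)` (case `r = s`)
decomposes, with `C = C(u,v)` and `C̄ = 1 - u - v + C`, as the sum of the three binomial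
parts and the off-diagonal remainder (`k ≠ i`, `k ≠ j`). -/
theorem multinomial_sum_decomposition (n r : ℕ) (hr : 1 ≤ r) (hrn : r ≤ n)
    (u v Cuv : ℝ) (Cb : ℝ) (hCb : Cb = 1 - u - v + Cuv) :
    ∑ i ∈ Finset.Icc r n, ∑ j ∈ Finset.Icc r n, ∑ k ∈ Finset.Icc (i + j - n) (min i j),
        multinomCoef n k i j * Cuv ^ k * (u - Cuv) ^ (i - k) * (v - Cuv) ^ (j - k) *
          Cb ^ (n + k - i - j) =
      (∑ i ∈ Finset.Icc r n, (n.choose i : ℝ) * Cuv ^ i * (v - Cuv + Cb) ^ (n - i)) +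
      (∑ j ∈ Finset.Icc r n, (n.choose j : ℝ) * Cuv ^ j * (u - Cuv + Cb) ^ (n - j)) -
      (∑ i ∈ Finset.Icc r n, (n.choose i : ℝ) * Cuv ^ i * Cb ^ (n - i)) +
      ∑ i ∈ Finset.Icc r n, ∑ j ∈ Finset.Icc r n,
        ∑ k ∈ (Finset.Icc (i + j - n) (min i j)).filter (fun k => k ≠ i ∧ k ≠ j),
          multinomCoef n k i j * Cuv ^ k * (u - Cuv) ^ (i - k) * (v - Cuv) ^ (j - k) *
            Cb ^ (n + k - i - j) := by
  set F : ℕ → ℕ → ℕ → ℝ := fun i j k =>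
    multinomCoef n k i j * Cuv ^ k * (u - Cuv) ^ (i - k) * (v - Cuv) ^ (j - k) *
      Cb ^ (n + k - i - j) with hF
  -- the complement filter is the singleton {min i j}
  have hsingleton : ∀ i ∈ Icc r n, ∀ j ∈ Icc r n,
      (Icc (i + j - n) (min i j)).filter (fun k => ¬(k ≠ i ∧ k ≠ j)) = {min i j} := by
    intro i hi j hj
    simp only [mem_Icc] at hi hj
    ext k
    simp only [Finset.mem_filter, mem_Icc, Finset.mem_singleton, ne_eq, not_and, not_not]
    omega
  -- split each inner sum
  have hsplit : ∀ i ∈ Icc r n, ∀ j ∈ Icc r n,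
      ∑ k ∈ Icc (i + j - n) (min i j), F i j k =
        (∑ k ∈ (Icc (i + j - n) (min i j)).filter (fun k => k ≠ i ∧ k ≠ j), F i j k)
          + F i j (min i j) := by
    intro i hi j hj
    rw [← Finset.sum_filter_add_sum_filter_not (Icc (i + j - n) (min i j))
      (fun k => k ≠ i ∧ k ≠ j), hsingleton i hi j hj, Finset.sum_singleton]
  rw [Finset.sum_congr rfl (fun i hi => Finset.sum_congr rfl (fun j hj => hsplit i hi j hj))]
  simp only [Finset.sum_add_distrib]
  rw [add_comm]
  congr 1
  -- now prove the diagonal part equals A + B - E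
  have hg : ∀ i ∈ Icc r n, ∀ j ∈ Icc r n, F i j (min i j) =
      (if i ≤ j then (n.choose i : ℝ) * ((n - i).choose (j - i) : ℝ) * Cuv ^ i
          * (v - Cuv) ^ (j - i) * Cb ^ (n - j) else 0) +
      (if j ≤ i then (n.choose j : ℝ) * ((n - j).choose (i - j) : ℝ) * Cuv ^ j
          * (u - Cuv) ^ (i - j) * Cb ^ (n - i) else 0) -
      (if i = j then (n.choose i : ℝ) * Cuv ^ i * Cb ^ (n - i) else 0) := by
    intro i hi j hj
    simp only [mem_Icc] at hi hj
    rcases lt_trichotomy i j with h | h | h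
    · have hmin : min i j = i := by omega
      rw [hmin, if_pos h.le, if_neg (by omega), if_neg (by omega), hF]
      simp only
      rw [coef_diag h.le hj.2]
      have h1 : i - i = 0 := by omega
      have h2 : n + i - i - j = n - j := by omega
      rw [h1, h2]
      ring
    · subst h
      have hmin : min i i = i := by omega
      rw [hmin, if_pos le_rfl, if_pos le_rfl, if_pos rfl, hF]
      simp only
      rw [coef_diag le_rfl hi.2]
      have h1 : i - i = 0 := by omega
      have h2 : n + i - i - i = n - i := by omega
      rw [h1, h2]
      simp [Nat.choose_zero_right]
    · have hmin : min i j = j := by omega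
      rw [hmin, if_neg (by omega), if_pos h.le, if_neg (by omega), hF]
      simp only
      rw [coef_diag' h.le hi.2]
      have h1 : j - j = 0 := by omega
      have h2 : n + j - i - j = n - i := by omega
      rw [h1, h2]
      ring
  rw [Finset.sum_congr rfl (fun i hi => Finset.sum_congr rfl (fun j hj => hg i hi j hj))]
  simp only [Finset.sum_add_distrib, Finset.sum_sub_distrib]
  congr 1
  · congr 1
    · -- A part
      apply Finset.sum_congr rfl
      intro i hi
      simp only [mem_Icc] at hi
      rw [Finset.sum_ite, Finset.sum_const_zero, add_zero]
      have hfil : (Icc r n).filter (fun j => i ≤ j) = Icc i n := by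
        ext j; simp only [Finset.mem_filter, mem_Icc]; omega
      rw [hfil]
      have := binom_sum hi.2 ((n.choose i : ℝ) * Cuv ^ i) (v - Cuv) Cb
      rw [← this]
      apply Finset.sum_congr rfl
      intro j hj
      ring
    · -- B part
      rw [Finset.sum_comm]
      apply Finset.sum_congr rfl
      intro j hj
      simp only [mem_Icc] at hj
      rw [Finset.sum_ite, Finset.sum_const_zero, add_zero]
      have hfil : (Icc r n).filter (fun i => j ≤ i) = Icc j n := by
        ext i; simp only [Finset.mem_filter, mem_Icc]; omega
      rw [hfil]
      have := binom_sum hj.2 ((n.choose j : ℝ) * Cuv ^ j) (u - Cuv) Cb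
      rw [← this]
      apply Finset.sum_congr rfl
      intro i hi
      ring
  · -- E part
    apply Finset.sum_congr rfl
    intro i hi
    rw [Finset.sum_ite_eq (Icc r n) i (fun _ => (n.choose i : ℝ) * Cuv ^ i * Cb ^ (n - i)),
      if_pos hi]
end
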